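/- Let Y be a sum of n independent {0,1}-valued random variables. Then for all ε ∈ (0,1) and δ ∈ (0,1), Pr[Y ≤ e^{-ε}·E[Y] - ln(1/δ)/ε] ≤ δ. -/

import Mathlib

open MeasureTheory ProbabilityTheory

/-- Let `Y = ∑ᵢ Yᵢ` be a sum of `n` independent `{0,1}`-valued random variables.
Then for all `ε, δ ∈ (0,1)`,
`Pr[Y ≤ e^{-ε}·E[Y] - ln(1/δ)/ε] ≤ δ`. -/
theorem stmt7 {Ω : Type*} [MeasurableSpace Ω] (μ : Measure Ω) [IsProbabilityMeasure μ]
    (n : ℕ) (Y : Fin n → Ω → ℝ)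
    (hmeas : ∀ i, Measurable (Y i))
    (hval : ∀ i ω, Y i ω = 0 ∨ Y i ω = 1)
    (hindep : iIndepFun Y μ)
    (ε δ : ℝ) (hε : ε ∈ Set.Ioo (0 : ℝ) 1) (hδ : δ ∈ Set.Ioo (0 : ℝ) 1) :
    (μ {ω | (∑ i, Y i ω) ≤ Real.exp (-ε) * (∫ ω', (∑ i, Y i ω') ∂μ) -
        Real.log (1 / δ) / ε}).toReal ≤ δ := by
  obtain ⟨hε0, hε1⟩ := hε
  obtain ⟨hδ0, hδ1⟩ := hδ
  set t : ℝ := -ε with ht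
  have ht0 : t ≤ 0 := by simp [ht]; linarith
  have hYnn : ∀ i ω, 0 ≤ Y i ω := by
    intro i ω; rcases hval i ω with h | h <;> simp [h]
  have hYle1 : ∀ i ω, Y i ω ≤ 1 := by
    intro i ω; rcases hval i ω with h | h <;> simp [h]
  have hYint : ∀ i, Integrable (Y i) μ := by
    intro i
    refine Integrable.mono' (integrable_const 1) (hmeas i).aestronglyMeasurable ?_
    filter_upwards with ω
    rw [Real.norm_eq_abs, abs_of_nonneg (hYnn i ω)]; exact hYle1 i ω
  have hexpint : ∀ (X : Ω → ℝ), Measurable X → (∀ ω, 0 ≤ X ω) →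
      Integrable (fun ω => Real.exp (t * X ω)) μ := by
    intro X hX hXnn
    refine Integrable.mono' (integrable_const 1) ((hX.const_mul t).exp).aestronglyMeasurable ?_
    filter_upwards with ω
    rw [Real.norm_eq_abs, abs_of_nonneg (Real.exp_nonneg _), Real.exp_le_one_iff]
    exact mul_nonpos_of_nonpos_of_nonneg ht0 (hXnn ω)
  set S : Ω → ℝ := fun ω => ∑ i, Y i ω with hS
  have hSmeas : Measurable S := by
    apply Finset.measurable_sum; intro i _; exact hmeas i
  have hSnn : ∀ ω, 0 ≤ S ω := fun ω => Finset.sum_nonneg fun i _ => hYnn i ω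
  set a : ℝ := Real.exp (-ε) * (∫ ω', S ω' ∂μ) - Real.log (1 / δ) / ε with ha
  -- Chernoff / Markov step
  have hmarkov : (μ {ω | S ω ≤ a}).toReal ≤ Real.exp (-t * a) * mgf S μ t := by
    have : S = ∑ i, Y i := by ext ω; simp [hS]
    exact measure_le_le_exp_mul_mgf a ht0 (hexpint S hSmeas hSnn)
  -- mgf of the sum
  have hmgf_sum : mgf (∑ i, Y i) μ t = ∏ i, mgf (Y i) μ t :=
    hindep.mgf_sum hmeas Finset.univ
  -- bound each mgf
  have hmgf_i : ∀ i, mgf (Y i) μ t ≤ Real.exp ((Real.exp t - 1) * ∫ ω, Y i ω ∂μ) := by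
    intro i
    have hpt : ∀ ω, Real.exp (t * Y i ω) = 1 + (Real.exp t - 1) * Y i ω := by
      intro ω; rcases hval i ω with h | h <;> simp [h]
    have : mgf (Y i) μ t = 1 + (Real.exp t - 1) * ∫ ω, Y i ω ∂μ := by
      rw [mgf]
      simp only [hpt]
      rw [integral_add (integrable_const 1) ((hYint i).const_mul _),
        integral_const, integral_const_mul]
      simp
    rw [this]
    have := Real.add_one_le_exp ((Real.exp t - 1) * ∫ ω, Y i ω ∂μ)
    linarith
  have hprod : ∏ i, mgf (Y i) μ t ≤ Real.exp ((Real.exp t - 1) * ∫ ω, S ω ∂μ) := by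
    have hint_sum : (∫ ω, S ω ∂μ) = ∑ i, ∫ ω, Y i ω ∂μ := by
      rw [hS]; exact integral_finset_sum _ (fun i _ => hYint i)
    rw [hint_sum, Finset.mul_sum, Real.exp_sum]
    exact Finset.prod_le_prod (fun i _ => mgf_nonneg) (fun i _ => hmgf_i i)
  -- combine
  have hE : 0 ≤ ∫ ω, S ω ∂μ := integral_nonneg hSnn
  have key : Real.exp (-t * a) * mgf S μ t ≤ δ := by
    have hmgfS : mgf S μ t ≤ Real.exp ((Real.exp t - 1) * ∫ ω, S ω ∂μ) := by
      have : mgf S μ t = ∏ i, mgf (Y i) μ t := by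
        rw [show S = ∑ i, Y i from by ext ω; simp [hS]]; exact hmgf_sum
      rw [this]; exact hprod
    calc Real.exp (-t * a) * mgf S μ t
        ≤ Real.exp (-t * a) * Real.exp ((Real.exp t - 1) * ∫ ω, S ω ∂μ) := by
          exact mul_le_mul_of_nonneg_left hmgfS (Real.exp_nonneg _)
      _ = Real.exp (-t * a + (Real.exp t - 1) * ∫ ω, S ω ∂μ) := (Real.exp_add _ _).symm
      _ ≤ δ := by
          rw [show (δ : ℝ) = Real.exp (Real.log δ) from (Real.exp_log hδ0).symm,
            Real.exp_le_exp]
          have hlog : Real.log (1 / δ) = - Real.log δ := by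
            rw [one_div, Real.log_inv]
          have hta : -t * a = ε * (Real.exp (-ε) * (∫ ω, S ω ∂μ)) + Real.log δ := by
            rw [ht, ha, hlog]
            field_simp
            ring
          rw [hta, ht]
          have h1 : (ε + 1) * Real.exp (-ε) ≤ 1 := by
            have h2 := Real.add_one_le_exp ε
            have h3 : Real.exp (-ε) = (Real.exp ε)⁻¹ := Real.exp_neg ε
            have h4 : (0:ℝ) < Real.exp ε := Real.exp_pos ε
            rw [h3]
            rw [mul_inv_le_iff₀ h4, one_mul]
            linarith
          nlinarith [Real.exp_pos (-ε)]
  calc (μ {ω | S ω ≤ a}).toReal ≤ Real.exp (-t * a) * mgf S μ t := hmarkov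
    _ ≤ δ := key
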